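/- arXiv:1307.5907 — 3 statements merged into one kernel-verified Lean document; each statement's English description precedes it below -/
import Mathlib

section
/- Let n ≥ 1 and D a self-adjoint n×n complex matrix that is not a scalar multiple of the identity. Then Ω¹_D(Mₙ(C)) = Mₙ(C). -/
open Matrix

lemma span_mul_right_mem {n : ℕ} (D : Matrix (Fin n) (Fin n) ℂ)
    {y : Matrix (Fin n) (Fin n) ℂ}
    (hy : y ∈ Submodule.span ℂ
      {x : Matrix (Fin n) (Fin n) ℂ | ∃ a b : Matrix (Fin n) (Fin n) ℂ,
        x = a * (D * b - b * D)}) (c : Matrix (Fin n) (Fin n) ℂ) :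
    y * c ∈ Submodule.span ℂ
      {x : Matrix (Fin n) (Fin n) ℂ | ∃ a b : Matrix (Fin n) (Fin n) ℂ,
        x = a * (D * b - b * D)} := by
  induction hy using Submodule.span_induction with
  | mem x hx =>
    obtain ⟨a, b, rfl⟩ := hx
    have key : a * (D * b - b * D) * c
        = a * (D * (b * c) - (b * c) * D) - (a * b) * (D * c - c * D) := by
      noncomm_ring
    rw [key]
    exact sub_mem (Submodule.subset_span ⟨a, b * c, rfl⟩)
      (Submodule.subset_span ⟨a * b, c, rfl⟩)
  | zero => simpa using Submodule.zero_mem _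
  | add x y _ _ hx hy => rw [add_mul]; exact add_mem hx hy
  | smul t x _ hx => rw [smul_mul_assoc]; exact Submodule.smul_mem _ t hx

lemma span_mul_left_mem {n : ℕ} (D : Matrix (Fin n) (Fin n) ℂ)
    {y : Matrix (Fin n) (Fin n) ℂ}
    (hy : y ∈ Submodule.span ℂ
      {x : Matrix (Fin n) (Fin n) ℂ | ∃ a b : Matrix (Fin n) (Fin n) ℂ,
        x = a * (D * b - b * D)}) (c : Matrix (Fin n) (Fin n) ℂ) :
    c * y ∈ Submodule.span ℂ
      {x : Matrix (Fin n) (Fin n) ℂ | ∃ a b : Matrix (Fin n) (Fin n) ℂ,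
        x = a * (D * b - b * D)} := by
  induction hy using Submodule.span_induction with
  | mem x hx =>
    obtain ⟨a, b, rfl⟩ := hx
    exact Submodule.subset_span ⟨c * a, b, by rw [mul_assoc]⟩
  | zero => simpa using Submodule.zero_mem _
  | add x y _ _ hx hy => rw [mul_add]; exact add_mem hx hy
  | smul t x _ hx => rw [mul_smul_comm]; exact Submodule.smul_mem _ t hx

/-- If D is a self-adjoint n×n complex matrix that is not a scalar
multiple of the identity, then Ω¹_D(Mₙ(ℂ)) = Mₙ(ℂ). -/
theorem stmt_3 (n : ℕ) (hn : 1 ≤ n) (D : Matrix (Fin n) (Fin n) ℂ)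
    (hD : D.IsHermitian)
    (hnontrivial : ∀ c : ℂ, D ≠ c • (1 : Matrix (Fin n) (Fin n) ℂ)) :
    Submodule.span ℂ
      {x : Matrix (Fin n) (Fin n) ℂ | ∃ a b : Matrix (Fin n) (Fin n) ℂ,
        x = a * (D * b - b * D)} = ⊤ := by
  set S := {x : Matrix (Fin n) (Fin n) ℂ | ∃ a b : Matrix (Fin n) (Fin n) ℂ,
        x = a * (D * b - b * D)} with hS
  -- D is not scalar, so there is a stdBasisMatrix b not commuting with D
  have hDns : D ∉ Set.range (Matrix.scalar (Fin n)) := by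
    rintro ⟨c, hc⟩
    exact hnontrivial c (by
      rw [← hc]
      ext a d
      simp [Matrix.scalar_apply, Matrix.smul_apply, Matrix.one_apply]
      split <;> simp [*])
  rw [Matrix.mem_range_scalar_iff_commute_single'] at hDns
  push_neg at hDns
  obtain ⟨i, j, hij⟩ := hDns
  set b := Matrix.single i j (1 : ℂ) with hb
  have hx : D * b - b * D ≠ 0 := by
    intro h
    apply hij
    unfold Commute SemiconjBy
    rw [← sub_eq_zero, ← neg_sub (D * b) (b * D), h, neg_zero]
  obtain ⟨p, q, hpq⟩ : ∃ p q, (D * b - b * D) p q ≠ 0 := by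
    by_contra h
    push_neg at h
    exact hx (Matrix.ext h)
  have hxS : D * b - b * D ∈ Submodule.span ℂ S :=
    Submodule.subset_span ⟨1, b, by rw [one_mul]⟩
  set x := D * b - b * D with hxdef
  -- every stdBasisMatrix is in the span
  have hstd : ∀ k l : Fin n, Matrix.single k l (1 : ℂ) ∈ Submodule.span ℂ S := by
    intro k l
    have h2 : Matrix.single k p (1 : ℂ) * x * Matrix.single q l (1 : ℂ)
        ∈ Submodule.span ℂ S :=
      span_mul_right_mem D (span_mul_left_mem D hxS _) _
    have h3 : Matrix.single k p (1 : ℂ) * x * Matrix.single q l (1 : ℂ)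
        = (x p q) • Matrix.single k l (1 : ℂ) := by
      ext a c
      by_cases hcl : c = l
      · subst hcl
        rw [Matrix.mul_single_apply_same 1 q c a]
        by_cases hak : a = k
        · subst hak
          rw [Matrix.single_mul_apply_same 1 a p q]
          simp
        · rw [Matrix.single_mul_apply_of_ne 1 k p a q hak]
          have hka : k ≠ a := fun h => hak h.symm
          simp [Matrix.smul_apply, Matrix.single_apply_of_row_ne hka]
      · rw [Matrix.mul_single_apply_of_ne 1 q l a c hcl]
        have hlc : l ≠ c := fun h => hcl h.symm
        simp [Matrix.smul_apply, Matrix.single_apply_of_col_ne _ _ hlc]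
    have := Submodule.smul_mem (Submodule.span ℂ S) (x p q)⁻¹ h2
    rw [h3, smul_smul, inv_mul_cancel₀ hpq, one_smul] at this
    exact this
  rw [eq_top_iff]
  intro M _
  rw [Matrix.matrix_eq_sum_single M]
  refine Submodule.sum_mem _ fun k _ => Submodule.sum_mem _ fun l _ => ?_
  have : Matrix.single k l (M k l) = (M k l) • Matrix.single k l (1 : ℂ) := by
    rw [Matrix.smul_single, smul_eq_mul, mul_one]
  rw [this]
  exact Submodule.smul_mem _ _ (hstd k l)
end

section
/- Let A ⊆ B(H) and D self-adjoint on a finite-dimensional H. An inner fluctuation A = D' − D ∈ Ω¹_D(A) (a morphism D → D') is an isomorphism in the category of inner fluctuations if and only if Ω¹_{D'}(A) = Ω¹_D(A); in that case the inverse morphism is −A. -/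
section Aux

variable {H : Type*} [NormedAddCommGroup H] [InnerProductSpace ℂ H]

/-- If `X ∈ Ω¹_D(𝒜)` and `a, b ∈ 𝒜`, then `a*(X*b - b*X) ∈ Ω¹_D(𝒜)`. -/
lemma aux_comm_mem (𝒜 : Subalgebra ℂ (H →L[ℂ] H)) (D : H →L[ℂ] H)
    {a b X : H →L[ℂ] H} (ha : a ∈ 𝒜) (hb : b ∈ 𝒜)
    (hX : X ∈ Submodule.span ℂ
      {x : H →L[ℂ] H | ∃ a ∈ 𝒜, ∃ b ∈ 𝒜, x = a * (D * b - b * D)}) :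
    a * (X * b - b * X) ∈ Submodule.span ℂ
      {x : H →L[ℂ] H | ∃ a ∈ 𝒜, ∃ b ∈ 𝒜, x = a * (D * b - b * D)} := by
  set S := Submodule.span ℂ
      {x : H →L[ℂ] H | ∃ a ∈ 𝒜, ∃ b ∈ 𝒜, x = a * (D * b - b * D)} with hS
  let f : (H →L[ℂ] H) →ₗ[ℂ] (H →L[ℂ] H) :=
    { toFun := fun X => a * (X * b - b * X)
      map_add' := by intro x y; noncomm_ring
      map_smul' := by
        intro c x
        simp only [smul_mul_assoc, ← smul_sub, mul_smul_comm, RingHom.id_apply] }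
  have : X ∈ Submodule.comap f S := by
    refine Submodule.span_le.mpr ?_ hX
    rintro x ⟨c, hc, d, hd, rfl⟩
    simp only [SetLike.mem_coe, Submodule.mem_comap]
    show a * ((c * (D * d - d * D)) * b - b * (c * (D * d - d * D))) ∈ S
    have key : a * ((c * (D * d - d * D)) * b - b * (c * (D * d - d * D)))
        = (a * c) * (D * (d * b) - (d * b) * D)
          - (a * c * d) * (D * b - b * D)
          - (a * b * c) * (D * d - d * D) := by noncomm_ring
    rw [key]
    refine sub_mem (sub_mem ?_ ?_) ?_
    · exact Submodule.subset_span ⟨a * c, mul_mem ha hc, d * b, mul_mem hd hb, rfl⟩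
    · exact Submodule.subset_span ⟨a * c * d, mul_mem (mul_mem ha hc) hd, b, hb, rfl⟩
    · exact Submodule.subset_span ⟨a * b * c, mul_mem (mul_mem ha hb) hc, d, hd, rfl⟩
  simpa [f] using this

/-- Monotonicity: `Ω¹_{D+X}(𝒜) ⊆ Ω¹_D(𝒜)` when `X ∈ Ω¹_D(𝒜)`. -/
lemma aux_span_le (𝒜 : Subalgebra ℂ (H →L[ℂ] H)) (D X : H →L[ℂ] H)
    (hX : X ∈ Submodule.span ℂ
      {x : H →L[ℂ] H | ∃ a ∈ 𝒜, ∃ b ∈ 𝒜, x = a * (D * b - b * D)}) :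
    Submodule.span ℂ
      {x : H →L[ℂ] H | ∃ a ∈ 𝒜, ∃ b ∈ 𝒜, x = a * ((D + X) * b - b * (D + X))}
    ≤ Submodule.span ℂ
      {x : H →L[ℂ] H | ∃ a ∈ 𝒜, ∃ b ∈ 𝒜, x = a * (D * b - b * D)} := by
  refine Submodule.span_le.mpr ?_
  rintro x ⟨a, ha, b, hb, rfl⟩
  have key : a * ((D + X) * b - b * (D + X))
      = a * (D * b - b * D) + a * (X * b - b * X) := by noncomm_ring
  rw [key]
  exact add_mem (Submodule.subset_span ⟨a, ha, b, hb, rfl⟩) (aux_comm_mem 𝒜 D ha hb hX)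

end Aux

/-- An inner fluctuation A = D' − D ∈ Ω¹_D(𝒜) (a morphism D → D')
is an isomorphism, i.e. the candidate inverse −A = D − D' is a morphism D' → D
(belongs to Ω¹_{D'}(𝒜)), if and only if Ω¹_{D'}(𝒜) = Ω¹_D(𝒜). -/
theorem stmt_5 {H : Type*} [NormedAddCommGroup H] [InnerProductSpace ℂ H]
    [FiniteDimensional ℂ H]
    (𝒜 : Subalgebra ℂ (H →L[ℂ] H))
    (D D' A : H →L[ℂ] H)
    (hD : IsSelfAdjoint D) (hD' : IsSelfAdjoint D') (hA : IsSelfAdjoint A)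
    (hAmem : A ∈ Submodule.span ℂ
      {x : H →L[ℂ] H | ∃ a ∈ 𝒜, ∃ b ∈ 𝒜, x = a * (D * b - b * D)})
    (hsum : D' = D + A) :
    (-A ∈ Submodule.span ℂ
      {x : H →L[ℂ] H | ∃ a ∈ 𝒜, ∃ b ∈ 𝒜, x = a * (D' * b - b * D')})
    ↔ Submodule.span ℂ
        {x : H →L[ℂ] H | ∃ a ∈ 𝒜, ∃ b ∈ 𝒜, x = a * (D' * b - b * D')}
      = Submodule.span ℂ
        {x : H →L[ℂ] H | ∃ a ∈ 𝒜, ∃ b ∈ 𝒜, x = a * (D * b - b * D)} := by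
  constructor
  · intro hneg
    refine le_antisymm ?_ ?_
    · have := aux_span_le 𝒜 D A hAmem
      rwa [← hsum] at this
    · have hDeq : D = D' + (-A) := by rw [hsum]; abel
      have := aux_span_le 𝒜 D' (-A) hneg
      rwa [← hDeq] at this
  · intro heq
    rw [heq]
    exact neg_mem hAmem
end

section
/- Let X_n ∈ Mₙ(C) be the lowering matrix with entries (X_n)_{k,k−1} = √(k−1) for 1 ≤ k ≤ n−1 (and zero elsewhere), and let D_n = √(2/θ)·[[0, X_n*],[X_n, 0]] ∈ M_{2n}(C). Then Ω¹_{D_n}(Mₙ(C)) — where Mₙ(C) acts diagonally as a ⊕ a on Cⁿ ⊕ Cⁿ — equals the set of all 2n×2n block matrices of the form [[0, A],[B, 0]] with A, B ∈ Mₙ(C). -/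
/-- The lowering matrix X_n, with (X_n)_{k,k−1} = √k (0-indexed). -/
noncomputable def lowering (n : ℕ) : Matrix (Fin n) (Fin n) ℂ :=
  fun i j => if (i : ℕ) = (j : ℕ) + 1 then ((Real.sqrt (i : ℕ) : ℝ) : ℂ) else 0

/-- The Dirac operator D_n = √(2/θ) [[0, X_n*],[X_n, 0]] on ℂⁿ ⊕ ℂⁿ. -/
noncomputable def diracN (n : ℕ) (θ : ℝ) : Matrix (Fin n ⊕ Fin n) (Fin n ⊕ Fin n) ℂ :=
  ((Real.sqrt (2 / θ) : ℝ) : ℂ) •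
    Matrix.fromBlocks 0 (lowering n).conjTranspose (lowering n) 0

open Matrix in
lemma comm_form (n : ℕ) (θ : ℝ) (a b : Matrix (Fin n) (Fin n) ℂ) :
    Matrix.fromBlocks a 0 0 a *
      (diracN n θ * Matrix.fromBlocks b 0 0 b
        - Matrix.fromBlocks b 0 0 b * diracN n θ)
    = Matrix.fromBlocks 0
        (((Real.sqrt (2 / θ) : ℝ) : ℂ) • (a * ((lowering n)ᴴ * b - b * (lowering n)ᴴ)))
        (((Real.sqrt (2 / θ) : ℝ) : ℂ) • (a * (lowering n * b - b * lowering n))) 0 := by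
  ext i j
  obtain i | i := i <;> obtain j | j := j <;>
    simp [diracN, Matrix.smul_mul, Matrix.mul_smul, Matrix.fromBlocks_multiply,
      Matrix.fromBlocks_smul, Matrix.mul_sub, mul_sub, Matrix.sub_apply, Matrix.smul_apply]

section helpers
open Matrix
variable {n : ℕ}

lemma sum_std_diag (n : ℕ) :
    (∑ k : Fin n, Matrix.single k k (1 : ℂ)) = 1 := by
  ext i j
  simp only [Matrix.sum_apply, Matrix.single, Matrix.one_apply, Matrix.of_apply]
  by_cases h : i = j
  · subst h
    rw [Finset.sum_eq_single i] <;> simp +contextual [eq_comm]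
  · rw [if_neg h, Finset.sum_eq_zero]
    intro x _
    rw [if_neg]
    rintro ⟨rfl, rfl⟩
    exact h rfl

lemma sum_fromBlocks (f g : Fin n → Matrix (Fin n) (Fin n) ℂ) :
    (∑ k : Fin n, Matrix.fromBlocks 0 (f k) (g k) 0)
      = Matrix.fromBlocks 0 (∑ k, f k) (∑ k, g k) 0 := by
  ext i j
  obtain i | i := i <;> obtain j | j := j <;> simp [Matrix.sum_apply]

end helpers

section key
open Matrix
private def z0 {n : ℕ} (h : 2 ≤ n) : Fin n := ⟨0, by omega⟩
private def z1 {n : ℕ} (h : 2 ≤ n) : Fin n := ⟨1, by omega⟩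

variable {n : ℕ} (hn : 2 ≤ n)

lemma L1 (k : Fin n) :
    Matrix.single k (z0 hn) (1 : ℂ) * (lowering n)ᴴ
      = Matrix.single k (z1 hn) (1 : ℂ) := by
  ext i j
  rcases eq_or_ne i k with rfl | h
  · rw [Matrix.single_mul_apply_same, one_mul, Matrix.conjTranspose_apply]
    rcases eq_or_ne j (z1 hn) with rfl | hj
    · simp [lowering, z0, z1]
    · have : ¬ ((j : ℕ) = (z0 hn : ℕ) + 1) := by
        simp only [z0]
        intro hc
        exact hj (Fin.ext (by simpa [z1] using hc))
      simp [lowering, this, Ne.symm hj]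
  · rw [Matrix.single_mul_apply_of_ne _ _ _ _ _ h,
      Matrix.single_apply_of_row_ne (Ne.symm h)]

lemma L2 (k : Fin n) :
    Matrix.single k (z0 hn) (1 : ℂ) * lowering n = 0 := by
  ext i j
  rcases eq_or_ne i k with rfl | h
  · rw [Matrix.single_mul_apply_same, one_mul]
    simp [lowering, z0]
  · rw [Matrix.single_mul_apply_of_ne _ _ _ _ _ h]; simp

lemma L3 (k : Fin n) :
    Matrix.single k (z1 hn) (1 : ℂ) * lowering n
      = Matrix.single k (z0 hn) (1 : ℂ) := by
  ext i j
  rcases eq_or_ne i k with rfl | h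
  · rw [Matrix.single_mul_apply_same, one_mul]
    rcases eq_or_ne j (z0 hn) with rfl | hj
    · simp [lowering, z0, z1]
    · have : ¬ ((z1 hn : ℕ) = (j : ℕ) + 1) := by
        simp only [z1]
        intro hc
        exact hj (Fin.ext (by simpa [z0] using hc.symm))
      simp [lowering, this, Ne.symm hj]
  · rw [Matrix.single_mul_apply_of_ne _ _ _ _ _ h,
      Matrix.single_apply_of_row_ne (Ne.symm h)]

lemma L4 (k : Fin n) :
    (lowering n)ᴴ * Matrix.single (z0 hn) k (1 : ℂ) = 0 := by
  ext i j
  rcases eq_or_ne j k with rfl | h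
  · rw [Matrix.mul_single_apply_same, mul_one, Matrix.conjTranspose_apply]
    simp [lowering, z0]
  · rw [Matrix.mul_single_apply_of_ne _ _ _ _ _ h]; simp

lemma z0_ne_z1 : z0 hn ≠ z1 hn := by
  simp [z0, z1, Fin.ext_iff]

lemma keyU (A : Matrix (Fin n) (Fin n) ℂ) (k : Fin n) :
    (A * Matrix.single k (z0 hn) 1) *
      ((lowering n)ᴴ * Matrix.single (z1 hn) k 1
        - Matrix.single (z1 hn) k 1 * (lowering n)ᴴ)
      = A * Matrix.single k k 1 := by
  rw [mul_assoc, Matrix.mul_sub, ← mul_assoc (Matrix.single k (z0 hn) 1),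
    ← mul_assoc (Matrix.single k (z0 hn) 1), L1 hn,
    Matrix.single_mul_single_same,
    Matrix.single_mul_single_of_ne (h := z0_ne_z1 hn)]
  simp

lemma keyU2 (A : Matrix (Fin n) (Fin n) ℂ) (k : Fin n) :
    (A * Matrix.single k (z0 hn) 1) *
      (lowering n * Matrix.single (z1 hn) k 1
        - Matrix.single (z1 hn) k 1 * lowering n)
      = 0 := by
  rw [mul_assoc, Matrix.mul_sub, ← mul_assoc (Matrix.single k (z0 hn) 1),
    ← mul_assoc (Matrix.single k (z0 hn) 1), L2 hn,
    Matrix.single_mul_single_of_ne (h := z0_ne_z1 hn)]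
  simp

lemma keyL (B : Matrix (Fin n) (Fin n) ℂ) (k : Fin n) :
    (B * Matrix.single k (z1 hn) 1) *
      (lowering n * Matrix.single (z0 hn) k 1
        - Matrix.single (z0 hn) k 1 * lowering n)
      = B * Matrix.single k k 1 := by
  rw [mul_assoc, Matrix.mul_sub, ← mul_assoc (Matrix.single k (z1 hn) 1),
    ← mul_assoc (Matrix.single k (z1 hn) 1), L3 hn,
    Matrix.single_mul_single_same,
    Matrix.single_mul_single_of_ne (h := Ne.symm (z0_ne_z1 hn))]
  simp

lemma keyL2 (B : Matrix (Fin n) (Fin n) ℂ) (k : Fin n) :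
    (B * Matrix.single k (z1 hn) 1) *
      ((lowering n)ᴴ * Matrix.single (z0 hn) k 1
        - Matrix.single (z0 hn) k 1 * (lowering n)ᴴ)
      = 0 := by
  rw [mul_assoc, Matrix.mul_sub, L4 hn,
    ← mul_assoc (Matrix.single k (z1 hn) 1),
    Matrix.single_mul_single_of_ne (h := Ne.symm (z0_ne_z1 hn))]
  simp

end key

/-- for the spectral triple (Mₙ(ℂ), ℂⁿ ⊗ ℂ², D_n), where Mₙ(ℂ) acts
diagonally as a ⊕ a, the module of 1-forms Ω¹_{D_n}(Mₙ(ℂ)) — the span of elements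
(a⊕a)[D_n, b⊕b] — is exactly the set of block matrices [[0, A],[B, 0]], A,B ∈ Mₙ(ℂ). -/
theorem stmt_16 (n : ℕ) (hn : 2 ≤ n) (θ : ℝ) (hθ : 0 < θ) :
    (Submodule.span ℂ
      {x : Matrix (Fin n ⊕ Fin n) (Fin n ⊕ Fin n) ℂ |
        ∃ a b : Matrix (Fin n) (Fin n) ℂ,
          x = Matrix.fromBlocks a 0 0 a *
            (diracN n θ * Matrix.fromBlocks b 0 0 b
              - Matrix.fromBlocks b 0 0 b * diracN n θ)} : Set _)
    = {m : Matrix (Fin n ⊕ Fin n) (Fin n ⊕ Fin n) ℂ |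
        ∃ A B : Matrix (Fin n) (Fin n) ℂ, m = Matrix.fromBlocks 0 A B 0} := by
  classical
  set S : Set (Matrix (Fin n ⊕ Fin n) (Fin n ⊕ Fin n) ℂ) :=
    {x | ∃ a b : Matrix (Fin n) (Fin n) ℂ,
          x = Matrix.fromBlocks a 0 0 a *
            (diracN n θ * Matrix.fromBlocks b 0 0 b
              - Matrix.fromBlocks b 0 0 b * diracN n θ)} with hS
  set c : ℂ := ((Real.sqrt (2 / θ) : ℝ) : ℂ) with hc
  set s : ℂ := ((Real.sqrt (θ / 2) : ℝ) : ℂ) with hs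
  have hsc : s * c = 1 := by
    rw [hs, hc, ← Complex.ofReal_mul, ← Real.sqrt_mul (by positivity : (0:ℝ) ≤ θ / 2)]
    have h2 : θ / 2 * (2 / θ) = 1 := by field_simp
    rw [h2, Real.sqrt_one, Complex.ofReal_one]
  have hU : ∀ A : Matrix (Fin n) (Fin n) ℂ,
      Matrix.fromBlocks 0 A 0 0 ∈ Submodule.span ℂ S := by
    intro A
    have hgen : ∀ k : Fin n,
        Matrix.fromBlocks 0 (c • (A * Matrix.single k k 1))
          (0 : Matrix (Fin n) (Fin n) ℂ) 0 ∈ Submodule.span ℂ S := by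
      intro k
      apply Submodule.subset_span
      refine ⟨A * Matrix.single k (z0 hn) 1, Matrix.single (z1 hn) k 1, ?_⟩
      rw [comm_form, keyU hn, keyU2 hn, smul_zero]
    have hsum := Submodule.sum_mem (Submodule.span ℂ S)
      (fun k (_ : k ∈ Finset.univ) => hgen k)
    have hsm := Submodule.smul_mem (Submodule.span ℂ S) s hsum
    have h1 : (∑ k : Fin n, c • (A * Matrix.single k k 1)) = c • A := by
      rw [← Finset.smul_sum, ← Finset.mul_sum, sum_std_diag, mul_one]
    have heq : s • ∑ k : Fin n,
        Matrix.fromBlocks 0 (c • (A * Matrix.single k k 1))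
          (0 : Matrix (Fin n) (Fin n) ℂ) 0 = Matrix.fromBlocks 0 A 0 0 := by
      rw [sum_fromBlocks, h1, Finset.sum_const_zero, Matrix.fromBlocks_smul,
        smul_smul, hsc, one_smul, smul_zero]
    rwa [heq] at hsm
  have hL : ∀ B : Matrix (Fin n) (Fin n) ℂ,
      Matrix.fromBlocks 0 0 B 0 ∈ Submodule.span ℂ S := by
    intro B
    have hgen : ∀ k : Fin n,
        Matrix.fromBlocks 0 (0 : Matrix (Fin n) (Fin n) ℂ)
          (c • (B * Matrix.single k k 1)) 0 ∈ Submodule.span ℂ S := by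
      intro k
      apply Submodule.subset_span
      refine ⟨B * Matrix.single k (z1 hn) 1, Matrix.single (z0 hn) k 1, ?_⟩
      rw [comm_form, keyL hn, keyL2 hn, smul_zero]
    have hsum := Submodule.sum_mem (Submodule.span ℂ S)
      (fun k (_ : k ∈ Finset.univ) => hgen k)
    have hsm := Submodule.smul_mem (Submodule.span ℂ S) s hsum
    have h1 : (∑ k : Fin n, c • (B * Matrix.single k k 1)) = c • B := by
      rw [← Finset.smul_sum, ← Finset.mul_sum, sum_std_diag, mul_one]
    have heq : s • ∑ k : Fin n,
        Matrix.fromBlocks 0 (0 : Matrix (Fin n) (Fin n) ℂ)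
          (c • (B * Matrix.single k k 1)) 0 = Matrix.fromBlocks 0 0 B 0 := by
      rw [sum_fromBlocks, h1, Finset.sum_const_zero, Matrix.fromBlocks_smul,
        smul_smul, hsc, one_smul, smul_zero]
    rwa [heq] at hsm
  apply Set.eq_of_subset_of_subset
  · intro x hx
    refine Submodule.span_induction ?_ ?_ ?_ ?_ hx
    · rintro y ⟨a, b, rfl⟩
      rw [comm_form]
      exact ⟨_, _, rfl⟩
    · exact ⟨0, 0, by simp⟩
    · rintro y z - - ⟨A, B, rfl⟩ ⟨A', B', rfl⟩
      exact ⟨A + A', B + B', by rw [Matrix.fromBlocks_add, add_zero]⟩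
    · rintro r y - ⟨A, B, rfl⟩
      exact ⟨r • A, r • B, by rw [Matrix.fromBlocks_smul, smul_zero]⟩
  · rintro m ⟨A, B, rfl⟩
    have hsplit : Matrix.fromBlocks 0 A B 0
        = Matrix.fromBlocks 0 A 0 0 + Matrix.fromBlocks 0 0 B 0 := by
      rw [Matrix.fromBlocks_add, add_zero, add_zero, zero_add]
    rw [hsplit]
    exact Submodule.add_mem _ (hU A) (hL B)
end
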